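/- For m ≥ 2h + 1 ≥ 3, the vertex connectivity of the Kneser graph K(m, h) equals the binomial coefficient C(m − h, h). -/

import Mathlib

/-- A single pebbling step: remove two pebbles from `u` and add one to an adjacent `v`. -/
def PebblingStep {V : Type} [DecidableEq V] (G : SimpleGraph V) (C C' : V → ℕ) : Prop :=
  ∃ u v : V, G.Adj u v ∧ 2 ≤ C u ∧
    C' = fun w => if w = u then C u - 2 else if w = v then C v + 1 else C w

/-- `C` solves the target distribution `D`: some sequence of pebbling steps reaches a
configuration with at least `D v` pebbles on each vertex `v`. -/
def Solvable {V : Type} [DecidableEq V] (G : SimpleGraph V) (C D : V → ℕ) : Prop :=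
  ∃ C' : V → ℕ, Relation.ReflTransGen (PebblingStep G) C C' ∧ ∀ v, D v ≤ C' v

/-- The distribution with `t` pebbles stacked on `r` and none elsewhere. -/
def stack {V : Type} [DecidableEq V] (r : V) (t : ℕ) : V → ℕ :=
  fun v => if v = r then t else 0

/-- The pebbling number of the demand `D` in `G`: the smallest `m` such that every
configuration of size `m` is `D`-solvable. -/
noncomputable def pebblingNumber {V : Type} [Fintype V] [DecidableEq V] (G : SimpleGraph V) (D : V → ℕ) : ℕ :=
  sInf {m | ∀ C : V → ℕ, (∑ v, C v) = m → Solvable G C D}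

/-- The `t`-fold pebbling number of `G`. -/
noncomputable def tPebblingNumber {V : Type} [Fintype V] [DecidableEq V]
    (G : SimpleGraph V) (t : ℕ) : ℕ :=
  Finset.univ.sup fun r => pebblingNumber G (stack r t)

/-- Reaching `C'` from `C` by exactly `k` pebbling steps. -/
inductive StepsN {V : Type} [DecidableEq V] (G : SimpleGraph V) : ℕ → (V → ℕ) → (V → ℕ) → Prop
  | refl (C : V → ℕ) : StepsN G 0 C C
  | tail {k : ℕ} {C C' C'' : V → ℕ} :
      StepsN G k C C' → PebblingStep G C' C'' → StepsN G (k + 1) C C''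

/-- `C` has an `r`-solution of cost at most `c` (cost = number of pebbling steps plus one). -/
def CheaplySolvable {V : Type} [DecidableEq V] (G : SimpleGraph V) (C : V → ℕ) (r : V) (c : ℕ) : Prop :=
  ∃ (k : ℕ) (C' : V → ℕ), StepsN G k C C' ∧ 1 ≤ C' r ∧ k + 1 ≤ c

/-- The eccentricity of a vertex: the maximum distance to any other vertex. -/
noncomputable def eccentricity {V : Type} [Fintype V] (G : SimpleGraph V) (r : V) : ℕ :=
  Finset.univ.sup fun v => G.dist r v

/-- A vertex is simplicial if its neighborhood induces a complete graph. -/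
def IsSimplicial {V : Type} (G : SimpleGraph V) (v : V) : Prop :=
  ∀ a b : V, G.Adj v a → G.Adj v b → a ≠ b → G.Adj a b

/-- A 2-path is either `K₂` or `K₃`, or a graph with exactly two simplicial vertices
`u` and `v` such that the neighborhood of `v` induces `K₂` and `G - v` is a 2-path. -/
inductive IsTwoPath : {V : Type} → SimpleGraph V → Prop
  | complete2 {V : Type} (G : SimpleGraph V) :
      Nat.card V = 2 → (∀ a b : V, a ≠ b → G.Adj a b) → IsTwoPath G
  | complete3 {V : Type} (G : SimpleGraph V) :
      Nat.card V = 3 → (∀ a b : V, a ≠ b → G.Adj a b) → IsTwoPath G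
  | extend {V : Type} (G : SimpleGraph V) (u v : V) :
      u ≠ v →
      {w : V | IsSimplicial G w} = {u, v} →
      (G.neighborSet v).ncard = 2 →
      IsSimplicial G v →
      IsTwoPath (G.induce {w : V | w ≠ v}) →
      IsTwoPath G

/-- The Kneser graph `K(m, h)`: vertices are the `h`-element subsets of `{1, …, m}`,
adjacent iff disjoint. -/
def kneserGraph (m h : ℕ) : SimpleGraph {s : Finset (Fin m) // s.card = h} :=
  SimpleGraph.fromRel fun a b => Disjoint a.1 b.1




namespace KC
open Finset

variable {V : Type} [Fintype V] [DecidableEq V] (G : SimpleGraph V)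

open scoped Classical
set_option linter.unusedSectionVars false

/-- external neighborhood of a finset -/
noncomputable def nbhd (F : Finset V) : Finset V :=
  Finset.univ.filter fun v => v ∉ F ∧ ∃ u ∈ F, G.Adj u v

/-- reachability avoiding s -/
def RO (s : Finset V) : V → V → Prop :=
  Relation.ReflTransGen fun x y => G.Adj x y ∧ x ∉ s ∧ y ∉ s

def Sep (s : Finset V) : Prop := ∃ a b : V, a ∉ s ∧ b ∉ s ∧ ¬ RO G s a b

noncomputable def kap : ℕ := sInf {n | ∃ t : Finset V, Sep G t ∧ t.card = n}

noncomputable def outF (F : Finset V) : Finset V := Finset.univ \ (F ∪ nbhd G F)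

def Frag (F : Finset V) : Prop :=
  F.Nonempty ∧ (outF G F).Nonempty ∧ (nbhd G F).card = kap G

noncomputable def atomCard : ℕ := sInf {n | ∃ F, Frag G F ∧ F.card = n}

def IsAtom' (A : Finset V) : Prop := Frag G A ∧ A.card = atomCard G

variable {G}

lemma mem_nbhd {F : Finset V} {v : V} :
    v ∈ nbhd G F ↔ v ∉ F ∧ ∃ u ∈ F, G.Adj u v := by
  simp [nbhd]

lemma not_mem_nbhd_of_mem {F : Finset V} {v : V} (h : v ∈ F) : v ∉ nbhd G F :=
  fun hv => (mem_nbhd.1 hv).1 h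

lemma mem_outF {F : Finset V} {v : V} :
    v ∈ outF G F ↔ v ∉ F ∧ v ∉ nbhd G F := by
  simp [outF]

lemma mem_nbhd_of_adj {F : Finset V} {u v : V} (hu : u ∈ F) (hv : v ∉ F)
    (h : G.Adj u v) : v ∈ nbhd G F :=
  mem_nbhd.2 ⟨hv, u, hu, h⟩

/-- trichotomy -/
lemma mem_trichotomy (F : Finset V) (v : V) : v ∈ F ∨ v ∈ nbhd G F ∨ v ∈ outF G F := by
  by_cases h1 : v ∈ F
  · exact Or.inl h1
  by_cases h2 : v ∈ nbhd G F
  · exact Or.inr (Or.inl h2)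
  · exact Or.inr (Or.inr (mem_outF.2 ⟨h1, h2⟩))

lemma ro_stays {F : Finset V} {a b : V} (ha : a ∈ F)
    (h : RO G (nbhd G F) a b) : b ∈ F := by
  induction h with
  | refl => exact ha
  | tail _ step ih =>
    rcases step with ⟨hadj, _, hnb⟩
    by_contra hb
    exact hnb (mem_nbhd_of_adj ih hb hadj)

lemma sep_nbhd {F : Finset V} (hF : F.Nonempty) (hO : (outF G F).Nonempty) :
    Sep G (nbhd G F) := by
  obtain ⟨a, ha⟩ := hF
  obtain ⟨b, hb⟩ := hO
  refine ⟨a, b, not_mem_nbhd_of_mem ha, (mem_outF.1 hb).2, fun h => ?_⟩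
  exact (mem_outF.1 hb).1 (ro_stays ha h)

lemma kap_le_card {t : Finset V} (h : Sep G t) : kap G ≤ t.card :=
  Nat.sInf_le ⟨t, h, rfl⟩

lemma kap_le_nbhd {F : Finset V} (hF : F.Nonempty) (hO : (outF G F).Nonempty) :
    kap G ≤ (nbhd G F).card :=
  kap_le_card (sep_nbhd hF hO)

lemma ro_right_not_mem {s : Finset V} {a b : V} (ha : a ∉ s) (h : RO G s a b) :
    b ∉ s := by
  induction h with
  | refl => exact ha
  | tail _ step _ => exact step.2.2

/-- existence of a fragment from a minimum separator -/
lemma frag_of_minsep {T : Finset V} (hT : Sep G T) (hc : T.card = kap G) :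
    ∃ F, Frag G F := by
  obtain ⟨a, b, ha, hb, hnr⟩ := hT
  set F : Finset V := Finset.univ.filter (fun v => RO G T a v) with hFdef
  have haF : a ∈ F := by
    simp only [hFdef, mem_filter, mem_univ, true_and]
    exact Relation.ReflTransGen.refl
  have hmemF : ∀ v, v ∈ F ↔ RO G T a v := by intro v; simp [hFdef]
  have hnbT : nbhd G F ⊆ T := by
    intro v hv
    rcases mem_nbhd.1 hv with ⟨hvF, u, huF, hadj⟩
    by_contra hvT
    exact hvF ((hmemF v).2 (Relation.ReflTransGen.tail ((hmemF u).1 huF)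
      ⟨hadj, ro_right_not_mem ha ((hmemF u).1 huF), hvT⟩))
  have hbF : b ∉ F := fun h => hnr ((hmemF b).1 h)
  have hbo : b ∈ outF G F := mem_outF.2 ⟨hbF, fun h => hb (hnbT h)⟩
  refine ⟨F, ⟨a, haF⟩, ⟨b, hbo⟩, le_antisymm ?_ ?_⟩
  · calc (nbhd G F).card ≤ T.card := card_le_card hnbT
      _ = kap G := hc
  · exact kap_le_nbhd ⟨a, haF⟩ ⟨b, hbo⟩

lemma nbhd_outF_subset (F : Finset V) : nbhd G (outF G F) ⊆ nbhd G F := by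
  intro v hv
  rcases mem_nbhd.1 hv with ⟨hvo, u, huo, hadj⟩
  have huF : u ∉ F := (mem_outF.1 huo).1
  have hvF : v ∉ F := by
    intro hvF
    exact (mem_outF.1 huo).2 (mem_nbhd_of_adj hvF huF hadj.symm)
  rcases mem_trichotomy F v with h | h | h
  · exact absurd h hvF
  · exact h
  · exact absurd h hvo

lemma subset_outF_outF (F : Finset V) : F ⊆ outF G (outF G F) := by
  intro v hv
  refine mem_outF.2 ⟨fun h => (mem_outF.1 h).1 hv, fun h => ?_⟩
  exact not_mem_nbhd_of_mem hv (nbhd_outF_subset F h)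

lemma frag_outF {F : Finset V} (hF : Frag G F) : Frag G (outF G F) := by
  obtain ⟨h1, h2, h3⟩ := hF
  have h4 : (outF G (outF G F)).Nonempty := h1.mono (subset_outF_outF F)
  refine ⟨h2, h4, le_antisymm ?_ (kap_le_nbhd h2 h4)⟩
  calc (nbhd G (outF G F)).card ≤ (nbhd G F).card := card_le_card (nbhd_outF_subset F)
    _ = kap G := h3

lemma atom_exists (hex : ∃ F, Frag G F) : ∃ A, IsAtom' G A := by
  have hne : {n | ∃ F, Frag G F ∧ F.card = n}.Nonempty := by
    obtain ⟨F, hF⟩ := hex; exact ⟨F.card, F, hF, rfl⟩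
  obtain ⟨F, hF, hc⟩ := Nat.sInf_mem hne
  exact ⟨F, hF, hc⟩

lemma atomCard_le {F : Finset V} (hF : Frag G F) : atomCard G ≤ F.card :=
  Nat.sInf_le ⟨F, hF, rfl⟩

/-- submodularity ingredients -/
lemma nbhd_union_subset (X Y : Finset V) : nbhd G (X ∪ Y) ⊆ nbhd G X ∪ nbhd G Y := by
  intro v hv
  rcases mem_nbhd.1 hv with ⟨hvF, u, huF, hadj⟩
  simp only [mem_union] at hvF huF ⊢
  push_neg at hvF
  rcases huF with hu | hu
  · exact Or.inl (mem_nbhd_of_adj hu hvF.1 hadj)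
  · exact Or.inr (mem_nbhd_of_adj hu hvF.2 hadj)

lemma nbhd_inter_subset (X Y : Finset V) : nbhd G (X ∩ Y) ⊆ nbhd G X ∪ nbhd G Y := by
  intro v hv
  rcases mem_nbhd.1 hv with ⟨hvF, u, huF, hadj⟩
  simp only [mem_inter] at hvF huF
  by_cases hx : v ∈ X
  · exact mem_union_right _ (mem_nbhd_of_adj huF.2 (fun hy => hvF ⟨hx, hy⟩) hadj)
  · exact mem_union_left _ (mem_nbhd_of_adj huF.1 hx hadj)

lemma nbhd_inter_inter_subset (X Y : Finset V) :
    nbhd G (X ∩ Y) ∩ nbhd G (X ∪ Y) ⊆ nbhd G X ∩ nbhd G Y := by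
  intro v hv
  rcases mem_inter.1 hv with ⟨h1, h2⟩
  rcases mem_nbhd.1 h1 with ⟨_, u, huF, hadj⟩
  have hvXY : v ∉ X ∪ Y := (mem_nbhd.1 h2).1
  simp only [mem_union] at hvXY; push_neg at hvXY
  simp only [mem_inter] at huF
  exact mem_inter.2 ⟨mem_nbhd_of_adj huF.1 hvXY.1 hadj, mem_nbhd_of_adj huF.2 hvXY.2 hadj⟩

lemma nbhd_submodular (X Y : Finset V) :
    (nbhd G (X ∩ Y)).card + (nbhd G (X ∪ Y)).card ≤ (nbhd G X).card + (nbhd G Y).card := by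
  rw [← card_union_add_card_inter]
  have h1 : (nbhd G (X ∩ Y)) ∪ (nbhd G (X ∪ Y)) ⊆ nbhd G X ∪ nbhd G Y :=
    union_subset (nbhd_inter_subset X Y) (nbhd_union_subset X Y)
  calc (nbhd G (X ∩ Y) ∪ nbhd G (X ∪ Y)).card + (nbhd G (X ∩ Y) ∩ nbhd G (X ∪ Y)).card
      ≤ (nbhd G X ∪ nbhd G Y).card + (nbhd G X ∩ nbhd G Y).card :=
        Nat.add_le_add (card_le_card h1) (card_le_card (nbhd_inter_inter_subset X Y))
    _ = (nbhd G X).card + (nbhd G Y).card := card_union_add_card_inter _ _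

lemma outF_inter_superset (P Q : Finset V) : outF G Q ⊆ outF G (P ∩ Q) := by
  intro v hv
  rcases mem_outF.1 hv with ⟨h1, h2⟩
  refine mem_outF.2 ⟨fun h => h1 (mem_inter.1 h).2, fun h => ?_⟩
  rcases mem_nbhd.1 h with ⟨_, u, huF, hadj⟩
  exact h2 (mem_nbhd_of_adj (mem_inter.1 huF).2 h1 hadj)

lemma outF_union_superset (P Q : Finset V) : outF G P ∩ outF G Q ⊆ outF G (P ∪ Q) := by
  intro v hv
  rcases mem_inter.1 hv with ⟨h1, h2⟩
  refine mem_outF.2 ⟨?_, fun h => ?_⟩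
  · simp only [mem_union]
    push_neg
    exact ⟨(mem_outF.1 h1).1, (mem_outF.1 h2).1⟩
  · rcases mem_union.1 (nbhd_union_subset P Q h) with h' | h'
    · exact (mem_outF.1 h1).2 h'
    · exact (mem_outF.1 h2).2 h'

lemma disj_F_nbhd (F : Finset V) : ∀ v, v ∈ F → v ∈ nbhd G F → False :=
  fun _ hv h => not_mem_nbhd_of_mem hv h

lemma card_partition (X F : Finset V) :
    (X ∩ F).card + (X ∩ nbhd G F).card + (X ∩ outF G F).card = X.card := by
  have h1 : Disjoint (X ∩ F) (X ∩ nbhd G F) := by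
    rw [disjoint_left]
    intro v hv hv'
    exact not_mem_nbhd_of_mem (mem_inter.1 hv).2 (mem_inter.1 hv').2
  have h2 : Disjoint ((X ∩ F) ∪ (X ∩ nbhd G F)) (X ∩ outF G F) := by
    rw [disjoint_left]
    intro v hv hv'
    have ho := mem_outF.1 (mem_inter.1 hv').2
    rcases mem_union.1 hv with h | h
    · exact ho.1 (mem_inter.1 h).2
    · exact ho.2 (mem_inter.1 h).2
  rw [← card_union_of_disjoint h1, ← card_union_of_disjoint h2]
  congr 1
  ext v
  simp only [mem_union, mem_inter]
  constructor
  · rintro ((⟨h,_⟩|⟨h,_⟩)|⟨h,_⟩) <;> exact h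
  · intro hv
    rcases mem_trichotomy F v with h | h | h
    · exact Or.inl (Or.inl ⟨hv, h⟩)
    · exact Or.inl (Or.inr ⟨hv, h⟩)
    · exact Or.inr ⟨hv, h⟩

lemma nbhd_inter_subset3 (P Q : Finset V) :
    nbhd G (P ∩ Q) ⊆ (P ∩ nbhd G Q) ∪ (nbhd G P ∩ Q) ∪ (nbhd G P ∩ nbhd G Q) := by
  intro v hv
  rcases mem_nbhd.1 hv with ⟨hvPQ, u, huPQ, hadj⟩
  rw [mem_inter] at huPQ
  simp only [mem_union, mem_inter]
  by_cases hp : v ∈ P <;> by_cases hq : v ∈ Q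
  · exact absurd (mem_inter.2 ⟨hp, hq⟩) hvPQ
  · exact Or.inl (Or.inl ⟨hp, mem_nbhd_of_adj huPQ.2 hq hadj⟩)
  · exact Or.inl (Or.inr ⟨mem_nbhd_of_adj huPQ.1 hp hadj, hq⟩)
  · exact Or.inr ⟨mem_nbhd_of_adj huPQ.1 hp hadj, mem_nbhd_of_adj huPQ.2 hq hadj⟩

lemma card_union3_le (X Y Z : Finset V) :
    (X ∪ Y ∪ Z).card ≤ X.card + Y.card + Z.card :=
  le_trans (card_union_le _ _) (Nat.add_le_add_right (card_union_le _ _) _)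

/-- Case 1 of Mader's lemma -/
lemma atom_subset_of_out_inter {A F : Finset V} (hA : IsAtom' G A) (hF : Frag G F)
    (h1 : (A ∩ F).Nonempty) (h2 : (outF G A ∩ outF G F).Nonempty) : A ⊆ F := by
  have hoAF : (outF G (A ∩ F)).Nonempty := hF.2.1.mono (outF_inter_superset A F)
  have hk1 : kap G ≤ (nbhd G (A ∩ F)).card := kap_le_nbhd h1 hoAF
  have hAuF : (A ∪ F).Nonempty := h1.mono ((inter_subset_left).trans subset_union_left)
  have hoU : (outF G (A ∪ F)).Nonempty := h2.mono (outF_union_superset A F)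
  have hk2 : kap G ≤ (nbhd G (A ∪ F)).card := kap_le_nbhd hAuF hoU
  have hsub := nbhd_submodular (G := G) A F
  rw [hA.1.2.2, hF.2.2] at hsub
  have he : (nbhd G (A ∩ F)).card = kap G := by omega
  have hfrag : Frag G (A ∩ F) := ⟨h1, hoAF, he⟩
  have hc : A.card ≤ (A ∩ F).card := hA.2 ▸ atomCard_le hfrag
  have heq : A ∩ F = A := eq_of_subset_of_card_le inter_subset_left hc
  exact fun v hv => (mem_inter.1 (heq ▸ hv)).2

/-- the key counting bound -/
lemma kap_le_three {A F : Finset V} (h1 : (A ∩ F).Nonempty)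
    (hout : (outF G (A ∩ F)).Nonempty) (hNF : nbhd G F ⊆ nbhd G F) :
    kap G ≤ (A ∩ nbhd G F).card + (nbhd G A ∩ F).card + (nbhd G A ∩ nbhd G F).card := by
  refine le_trans (kap_le_nbhd h1 hout) ?_
  exact le_trans (card_le_card (nbhd_inter_subset3 A F)) (card_union3_le _ _ _)

/-- Mader's lemma: an atom meeting a fragment is contained in it. -/
lemma mader {A F : Finset V} (hA : IsAtom' G A) (hF : Frag G F)
    (h1 : (A ∩ F).Nonempty) : A ⊆ F := by
  classical
  by_cases h2 : (outF G A ∩ outF G F).Nonempty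
  · exact atom_subset_of_out_inter hA hF h1 h2
  have hFb : Frag G (outF G F) := frag_outF hF
  have hA_le_T : ∀ X : Finset V, A.card ≤ (A ∩ X).card → A ⊆ X := by
    intro X hle
    have heq : A ∩ X = A := eq_of_subset_of_card_le inter_subset_left hle
    exact fun v hv => (mem_inter.1 (heq ▸ hv)).2
  have hcontra : ∀ (h : A ⊆ nbhd G F), False := by
    intro h
    obtain ⟨v, hv⟩ := h1
    exact not_mem_nbhd_of_mem (mem_inter.1 hv).2 (h (mem_inter.1 hv).1)
  by_cases h3 : (A ∩ outF G F).Nonempty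
  · -- subcase 2a
    by_cases h4 : (outF G A ∩ outF G (outF G F)).Nonempty
    · have hsub : A ⊆ outF G F := atom_subset_of_out_inter hA hFb h3 h4
      obtain ⟨v, hv⟩ := h1
      exact absurd (mem_inter.1 hv).2 (mem_outF.1 (hsub (mem_inter.1 hv).1)).1
    · exfalso
      rw [not_nonempty_iff_eq_empty] at h2 h4
      have hAbT : outF G A ⊆ nbhd G F := by
        intro v hv
        rcases mem_trichotomy (outF G F) v with h | h | h
        · exact absurd (mem_inter.2 ⟨hv, h⟩) (by rw [h2]; exact notMem_empty v)
        · exact nbhd_outF_subset F h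
        · exact absurd (mem_inter.2 ⟨hv, h⟩) (by rw [h4]; exact notMem_empty v)
      -- first bound
      have b1 : kap G ≤ (A ∩ nbhd G F).card + (nbhd G A ∩ F).card
          + (nbhd G A ∩ nbhd G F).card :=
        kap_le_three h1 (hF.2.1.mono (outF_inter_superset A F)) (subset_rfl)
      -- second bound, with fragment outF F
      have hout2 : (outF G (A ∩ outF G F)).Nonempty :=
        (hF.1.mono (subset_outF_outF F)).mono (outF_inter_superset A (outF G F))
      have b2' : kap G ≤ (A ∩ nbhd G (outF G F)).card + (nbhd G A ∩ outF G F).card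
          + (nbhd G A ∩ nbhd G (outF G F)).card :=
        kap_le_three h3 hout2 (subset_rfl)
      have b2 : kap G ≤ (A ∩ nbhd G F).card + (nbhd G A ∩ outF G F).card
          + (nbhd G A ∩ nbhd G F).card := by
        refine le_trans b2' (Nat.add_le_add (Nat.add_le_add ?_ le_rfl) ?_)
        · exact card_le_card (inter_subset_inter Subset.rfl (nbhd_outF_subset F))
        · exact card_le_card (inter_subset_inter Subset.rfl (nbhd_outF_subset F))
      -- partition of S = nbhd A by F
      have pS : (nbhd G A ∩ F).card + (nbhd G A ∩ nbhd G F).card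
          + (nbhd G A ∩ outF G F).card = kap G := by
        rw [card_partition (nbhd G A) F, hA.1.2.2]
      -- partition of T = nbhd F by A
      have pT : (nbhd G F ∩ A).card + (nbhd G F ∩ nbhd G A).card
          + (nbhd G F ∩ outF G A).card = kap G := by
        rw [card_partition (nbhd G F) A, hF.2.2]
      have hAbcard : (nbhd G F ∩ outF G A).card = (outF G A).card := by
        congr 1
        exact inter_eq_right.2 hAbT
      have hAbfrag : Frag G (outF G A) := frag_outF hA.1
      have hle1 : A.card ≤ (outF G A).card := hA.2 ▸ atomCard_le hAbfrag
      have hcomm1 : (nbhd G F ∩ A).card = (A ∩ nbhd G F).card := by rw [inter_comm]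
      have hcomm2 : (nbhd G F ∩ nbhd G A).card = (nbhd G A ∩ nbhd G F).card := by
        rw [inter_comm]
      have hfin : A.card ≤ (A ∩ nbhd G F).card := by omega
      exact hcontra (hA_le_T _ hfin)
  · -- subcase 2b
    exfalso
    rw [not_nonempty_iff_eq_empty] at h2 h3
    have hFbS : outF G F ⊆ nbhd G A := by
      intro v hv
      rcases mem_trichotomy A v with h | h | h
      · exact absurd (mem_inter.2 ⟨h, hv⟩) (by rw [h3]; exact notMem_empty v)
      · exact h
      · exact absurd (mem_inter.2 ⟨h, hv⟩) (by rw [h2]; exact notMem_empty v)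
    have b1 : kap G ≤ (A ∩ nbhd G F).card + (nbhd G A ∩ F).card
        + (nbhd G A ∩ nbhd G F).card :=
      kap_le_three h1 (hF.2.1.mono (outF_inter_superset A F)) (subset_rfl)
    have pS : (nbhd G A ∩ F).card + (nbhd G A ∩ nbhd G F).card
        + (nbhd G A ∩ outF G F).card = kap G := by
      rw [card_partition (nbhd G A) F, hA.1.2.2]
    have hFbcard : (nbhd G A ∩ outF G F).card = (outF G F).card := by
      congr 1
      exact inter_eq_right.2 hFbS
    have hle1 : A.card ≤ (outF G F).card := hA.2 ▸ atomCard_le hFb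
    have hfin : A.card ≤ (A ∩ nbhd G F).card := by omega
    exact hcontra (hA_le_T _ hfin)

lemma image_nbhd_subset (φ : G ≃g G) (F : Finset V) :
    (nbhd G F).image φ ⊆ nbhd G (F.image φ) := by
  intro v hv
  rcases mem_image.1 hv with ⟨w, hw, rfl⟩
  rcases mem_nbhd.1 hw with ⟨hwF, u, huF, hadj⟩
  refine mem_nbhd.2 ⟨fun h => ?_, φ u, mem_image_of_mem _ huF, φ.map_adj_iff.2 hadj⟩
  rcases mem_image.1 h with ⟨x, hx, hex⟩
  exact hwF (φ.injective hex ▸ hx)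

lemma image_image_symm (φ : G ≃g G) (F : Finset V) :
    (F.image φ).image φ.symm = F := by
  rw [image_image]
  have : (⇑φ.symm ∘ ⇑φ) = id := by
    funext x
    simp
  rw [this, image_id]

lemma nbhd_image (φ : G ≃g G) (F : Finset V) :
    nbhd G (F.image φ) = (nbhd G F).image φ := by
  refine Subset.antisymm ?_ (image_nbhd_subset φ F)
  intro v hv
  have h1 : φ.symm v ∈ (nbhd G (F.image φ)).image φ.symm := mem_image_of_mem _ hv
  have h2 := image_nbhd_subset φ.symm (F.image φ) h1
  rw [image_image_symm φ F] at h2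
  have : v = φ (φ.symm v) := by simp
  rw [this]
  exact mem_image_of_mem _ h2

lemma outF_image (φ : G ≃g G) (F : Finset V) :
    outF G (F.image φ) = (outF G F).image φ := by
  unfold outF
  rw [nbhd_image, ← image_union, image_sdiff _ _ φ.injective]
  congr 1
  exact (image_univ_equiv φ.toEquiv).symm

lemma frag_image (φ : G ≃g G) {F : Finset V} (hF : Frag G F) : Frag G (F.image φ) := by
  refine ⟨hF.1.image φ, ?_, ?_⟩
  · rw [outF_image]
    exact hF.2.1.image φ
  · rw [nbhd_image, card_image_of_injective _ φ.injective]
    exact hF.2.2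

lemma isAtom'_image (φ : G ≃g G) {A : Finset V} (hA : IsAtom' G A) :
    IsAtom' G (A.image φ) := by
  refine ⟨frag_image φ hA.1, ?_⟩
  rw [card_image_of_injective _ φ.injective]
  exact hA.2

/-- Watkins' theorem: in a connected, edge-transitive, d-regular graph, every
separating set has at least d vertices. -/
theorem watkins (d : ℕ) (hreg : ∀ v : V, (nbhd G {v}).card = d)
    (hconn : ∀ a b : V, Relation.ReflTransGen G.Adj a b)
    (hedge : ∀ u v u' v' : V, G.Adj u v → G.Adj u' v' →
      ∃ φ : G ≃g G, φ u = u' ∧ φ v = v')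
    {s : Finset V} (hs : Sep G s) : d ≤ s.card := by
  by_contra hlt
  push_neg at hlt
  have hkap : kap G ≤ s.card := kap_le_card hs
  have hkd : kap G < d := lt_of_le_of_lt hkap hlt
  have hne : {n | ∃ t : Finset V, Sep G t ∧ t.card = n}.Nonempty := ⟨s.card, s, hs, rfl⟩
  obtain ⟨T, hT, hTc⟩ := Nat.sInf_mem hne
  have hTc' : T.card = kap G := hTc
  obtain ⟨F0, hF0⟩ := frag_of_minsep hT hTc'
  obtain ⟨A, hA⟩ := atom_exists ⟨F0, hF0⟩
  by_cases hE : ∃ x y, x ∈ A ∧ y ∈ A ∧ G.Adj x y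
  · obtain ⟨x0, y0, hx0, hy0, hxy⟩ := hE
    have hclosed : ∀ v w, v ∈ A → G.Adj v w → w ∈ A := by
      intro v w hv hvw
      obtain ⟨φ, hφ1, hφ2⟩ := hedge x0 y0 v w hxy hvw
      have hA' : IsAtom' G (A.image φ) := isAtom'_image φ hA
      have hvA' : v ∈ A.image φ := by rw [← hφ1]; exact mem_image_of_mem _ hx0
      have h1 : A ⊆ A.image φ := mader hA hA'.1 ⟨v, mem_inter.2 ⟨hv, hvA'⟩⟩
      have h2 : A.image φ ⊆ A := mader hA' hA.1 ⟨v, mem_inter.2 ⟨hvA', hv⟩⟩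
      have hAA : A.image φ = A := Subset.antisymm h2 h1
      rw [← hAA, ← hφ2]
      exact mem_image_of_mem _ hy0
    have key : ∀ b, Relation.ReflTransGen G.Adj x0 b → b ∈ A := by
      intro b hchain
      induction hchain with
      | refl => exact hx0
      | tail h step ih => exact hclosed _ _ ih step
    obtain ⟨b, hb⟩ := hA.1.2.1
    exact (mem_outF.1 hb).1 (key b (hconn x0 b))
  · push_neg at hE
    obtain ⟨v, hv⟩ := hA.1.1
    have hsub : nbhd G {v} ⊆ nbhd G A := by
      intro w hw
      rcases mem_nbhd.1 hw with ⟨hw1, u, hu, hadj⟩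
      have huv : u = v := mem_singleton.1 hu
      subst huv
      have hwA : w ∉ A := fun h => hE u w hv h hadj
      exact mem_nbhd_of_adj hv hwA hadj
    have hdk : d ≤ kap G := by
      rw [← hreg v, ← hA.1.2.2]
      exact card_le_card hsub
    omega

end KC

namespace KN
open Finset

abbrev KV (m h : ℕ) := {s : Finset (Fin m) // s.card = h}

variable {m h : ℕ}

lemma kneser_adj (hh : 1 ≤ h) {a b : KV m h} :
    (kneserGraph m h).Adj a b ↔ Disjoint a.1 b.1 := by
  rw [kneserGraph, SimpleGraph.fromRel_adj]
  constructor
  · rintro ⟨hne, hd | hd⟩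
    · exact hd
    · exact hd.symm
  · intro hd
    refine ⟨fun hab => ?_, Or.inl hd⟩
    rw [hab] at hd
    have hbe : b.1 = ∅ := (Finset.disjoint_self_iff_empty _).1 hd
    have hb := b.2
    rw [hbe, card_empty] at hb
    omega

lemma exists_perm_pair (X Y X' Y' : Finset (Fin m)) (hXY : Disjoint X Y)
    (hXY' : Disjoint X' Y') (h1 : X.card = X'.card) (h2 : Y.card = Y'.card) :
    ∃ π : Equiv.Perm (Fin m), X.image π = X' ∧ Y.image π = Y' := by
  classical
  have hZ : ((X ∪ Y)ᶜ).card = ((X' ∪ Y')ᶜ).card := by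
    rw [card_compl, card_compl, card_union_of_disjoint hXY, card_union_of_disjoint hXY',
      h1, h2]
  let eX := Finset.equivOfCardEq h1
  let eY := Finset.equivOfCardEq h2
  let eZ := Finset.equivOfCardEq hZ
  have hmemZ : ∀ v : Fin m, v ∉ X → v ∉ Y → v ∈ (X ∪ Y)ᶜ := by
    intro v hx hy; rw [mem_compl, mem_union]; push_neg; exact ⟨hx, hy⟩
  have hmemZ' : ∀ v : Fin m, v ∉ X' → v ∉ Y' → v ∈ (X' ∪ Y')ᶜ := by
    intro v hx hy; rw [mem_compl, mem_union]; push_neg; exact ⟨hx, hy⟩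
  let f : Fin m → Fin m := fun v =>
    if hx : v ∈ X then (eX ⟨v, hx⟩ : Fin m)
    else if hy : v ∈ Y then (eY ⟨v, hy⟩ : Fin m)
    else (eZ ⟨v, hmemZ v hx hy⟩ : Fin m)
  let g : Fin m → Fin m := fun v =>
    if hx : v ∈ X' then (eX.symm ⟨v, hx⟩ : Fin m)
    else if hy : v ∈ Y' then (eY.symm ⟨v, hy⟩ : Fin m)
    else (eZ.symm ⟨v, hmemZ' v hx hy⟩ : Fin m)
  have hfX : ∀ (v : Fin m) (hx : v ∈ X), f v = (eX ⟨v, hx⟩ : Fin m) := by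
    intro v hx; simp only [f, dif_pos hx]
  have hfY : ∀ (v : Fin m) (hx : v ∉ X) (hy : v ∈ Y), f v = (eY ⟨v, hy⟩ : Fin m) := by
    intro v hx hy; simp only [f, dif_neg hx, dif_pos hy]
  have hfZ : ∀ (v : Fin m) (hx : v ∉ X) (hy : v ∉ Y),
      f v = (eZ ⟨v, hmemZ v hx hy⟩ : Fin m) := by
    intro v hx hy; simp only [f, dif_neg hx, dif_neg hy]
  have hgX : ∀ (v : Fin m) (hx : v ∈ X'), g v = (eX.symm ⟨v, hx⟩ : Fin m) := by
    intro v hx; simp only [g, dif_pos hx]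
  have hgY : ∀ (v : Fin m) (hx : v ∉ X') (hy : v ∈ Y'), g v = (eY.symm ⟨v, hy⟩ : Fin m) := by
    intro v hx hy; simp only [g, dif_neg hx, dif_pos hy]
  have hgZ : ∀ (v : Fin m) (hx : v ∉ X') (hy : v ∉ Y'),
      g v = (eZ.symm ⟨v, hmemZ' v hx hy⟩ : Fin m) := by
    intro v hx hy; simp only [g, dif_neg hx, dif_neg hy]
  have hcomplX' : ∀ w : Fin m, w ∈ (X' ∪ Y')ᶜ → w ∉ X' ∧ w ∉ Y' := by
    intro w hw; rw [mem_compl, mem_union] at hw; push_neg at hw; exact hw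
  have hcomplX : ∀ w : Fin m, w ∈ (X ∪ Y)ᶜ → w ∉ X ∧ w ∉ Y := by
    intro w hw; rw [mem_compl, mem_union] at hw; push_neg at hw; exact hw
  have hgf : ∀ v, g (f v) = v := by
    intro v
    by_cases hx : v ∈ X
    · rw [hfX v hx, hgX _ (coe_mem _), Subtype.coe_eta, Equiv.symm_apply_apply]
    · by_cases hy : v ∈ Y
      · have hmem : (eY ⟨v, hy⟩ : Fin m) ∈ Y' := coe_mem _
        have hnx : (eY ⟨v, hy⟩ : Fin m) ∉ X' := fun hc => disjoint_left.1 hXY' hc hmem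
        rw [hfY v hx hy, hgY _ hnx hmem, Subtype.coe_eta, Equiv.symm_apply_apply]
      · have hmem := coe_mem (eZ ⟨v, hmemZ v hx hy⟩)
        obtain ⟨hnx, hny⟩ := hcomplX' _ hmem
        rw [hfZ v hx hy, hgZ _ hnx hny, Subtype.coe_eta, Equiv.symm_apply_apply]
  have hfg : ∀ v, f (g v) = v := by
    intro v
    by_cases hx : v ∈ X'
    · have : (eX.symm ⟨v, hx⟩ : Fin m) ∈ X := coe_mem _
      rw [hgX v hx, hfX _ this, Subtype.coe_eta, Equiv.apply_symm_apply]
    · by_cases hy : v ∈ Y'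
      · have hmem : (eY.symm ⟨v, hy⟩ : Fin m) ∈ Y := coe_mem _
        have hnx : (eY.symm ⟨v, hy⟩ : Fin m) ∉ X := fun hc => disjoint_left.1 hXY hc hmem
        rw [hgY v hx hy, hfY _ hnx hmem, Subtype.coe_eta, Equiv.apply_symm_apply]
      · have hmem := coe_mem (eZ.symm ⟨v, hmemZ' v hx hy⟩)
        obtain ⟨hnx, hny⟩ := hcomplX _ hmem
        rw [hgZ v hx hy, hfZ _ hnx hny, Subtype.coe_eta, Equiv.apply_symm_apply]
  let π : Equiv.Perm (Fin m) := ⟨f, g, hgf, hfg⟩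
  have hXim : X.image π = X' := by
    have hsub : X.image π ⊆ X' := by
      intro w hw
      rcases mem_image.1 hw with ⟨x, hx, rfl⟩
      show f x ∈ X'
      rw [hfX x hx]
      exact coe_mem _
    refine eq_of_subset_of_card_le hsub ?_
    rw [card_image_of_injective _ π.injective, h1]
  have hYim : Y.image π = Y' := by
    have hsub : Y.image π ⊆ Y' := by
      intro w hw
      rcases mem_image.1 hw with ⟨y, hy, rfl⟩
      show f y ∈ Y'
      have hny : y ∉ X := fun hc => disjoint_left.1 hXY hc hy
      rw [hfY y hny hy]
      exact coe_mem _
    refine eq_of_subset_of_card_le hsub ?_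
    rw [card_image_of_injective _ π.injective, h2]
  exact ⟨π, hXim, hYim⟩

noncomputable def permIso (π : Equiv.Perm (Fin m)) :
    kneserGraph m h ≃g kneserGraph m h := by
  refine ⟨⟨fun B => ⟨B.1.image π, by rw [card_image_of_injective _ π.injective, B.2]⟩,
    fun B => ⟨B.1.image π.symm, by rw [card_image_of_injective _ π.symm.injective, B.2]⟩,
    ?_, ?_⟩, ?_⟩
  · intro B
    apply Subtype.ext
    show (B.1.image π).image π.symm = B.1
    rw [image_image, Equiv.symm_comp_self, image_id]
  · intro B
    apply Subtype.ext
    show (B.1.image π.symm).image π = B.1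
    rw [image_image, Equiv.self_comp_symm, image_id]
  · intro a b
    show (kneserGraph m h).Adj ⟨a.1.image π, _⟩ ⟨b.1.image π, _⟩ ↔ (kneserGraph m h).Adj a b
    rw [kneserGraph, SimpleGraph.fromRel_adj, SimpleGraph.fromRel_adj]
    constructor
    · rintro ⟨hne, hd⟩
      refine ⟨fun hab => hne (by rw [hab]), ?_⟩
      rcases hd with hd | hd
      · exact Or.inl (by rwa [Finset.disjoint_image π.injective] at hd)
      · exact Or.inr (by rwa [Finset.disjoint_image π.injective] at hd)
    · rintro ⟨hne, hd⟩
      refine ⟨fun hab => ?_, ?_⟩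
      · apply hne
        apply Subtype.ext
        have := congrArg Subtype.val hab
        exact Finset.image_injective π.injective this
      · rcases hd with hd | hd
        · exact Or.inl ((Finset.disjoint_image π.injective).2 hd)
        · exact Or.inr ((Finset.disjoint_image π.injective).2 hd)

lemma kneser_edge_trans (hh : 1 ≤ h) (u v u' v' : KV m h)
    (huv : (kneserGraph m h).Adj u v) (hu'v' : (kneserGraph m h).Adj u' v') :
    ∃ φ : kneserGraph m h ≃g kneserGraph m h, φ u = u' ∧ φ v = v' := by
  rw [kneser_adj hh] at huv hu'v'
  obtain ⟨π, h1, h2⟩ := exists_perm_pair u.1 v.1 u'.1 v'.1 huv hu'v'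
    (by rw [u.2, u'.2]) (by rw [v.2, v'.2])
  exact ⟨permIso π, Subtype.ext h1, Subtype.ext h2⟩

lemma kneser_conn (hh : 1 ≤ h) (hm : 2 * h + 1 ≤ m) :
    ∀ A B : KV m h, Relation.ReflTransGen (kneserGraph m h).Adj A B := by
  suffices H : ∀ n (A B : KV m h), (A.1 \ B.1).card = n →
      Relation.ReflTransGen (kneserGraph m h).Adj A B by
    intro A B; exact H _ A B rfl
  intro n
  induction n with
  | zero =>
    intro A B hc
    have hsub : A.1 ⊆ B.1 := sdiff_eq_empty_iff_subset.1 (card_eq_zero.1 hc)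
    have : A = B := Subtype.ext (Finset.eq_of_subset_of_card_le hsub (by rw [A.2, B.2]))
    rw [this]
  | succ n ih =>
    intro A B hc
    have hA : (A.1 \ B.1).Nonempty := by rw [← card_pos, hc]; omega
    obtain ⟨a, ha⟩ := hA
    have hBA : (B.1 \ A.1).Nonempty := by
      rw [← card_pos, Finset.card_sdiff_comm (by rw [A.2, B.2] : B.1.card = A.1.card), hc]
      omega
    obtain ⟨b, hb⟩ := hBA
    have haA : a ∈ A.1 := (mem_sdiff.1 ha).1
    have haB : a ∉ B.1 := (mem_sdiff.1 ha).2
    have hbB : b ∈ B.1 := (mem_sdiff.1 hb).1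
    have hbA : b ∉ A.1 := (mem_sdiff.1 hb).2
    have hanotin : a ∉ B.1.erase b := fun hmem => haB (mem_of_mem_erase hmem)
    have hB'card : (insert a (B.1.erase b)).card = h := by
      rw [card_insert_of_notMem hanotin, card_erase_of_mem hbB, B.2]
      omega
    set Bv : KV m h := ⟨insert a (B.1.erase b), hB'card⟩ with hBv
    have hAB' : (A.1 \ Bv.1).card = n := by
      have hset : A.1 \ Bv.1 = (A.1 \ B.1).erase a := by
        ext x
        simp only [hBv, mem_sdiff, mem_erase, mem_insert, mem_erase]
        constructor
        · rintro ⟨hxA, hx⟩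
          push_neg at hx
          exact ⟨hx.1, hxA, fun hxB => hx.2 (fun hxb => hbA (hxb ▸ hxA)) hxB⟩
        · rintro ⟨hxa, hxA, hxB⟩
          exact ⟨hxA, by push_neg; exact ⟨hxa, fun _ => hxB⟩⟩
      rw [hset, card_erase_of_mem ha, hc]
      omega
    have step1 : Relation.ReflTransGen (kneserGraph m h).Adj A Bv := ih A Bv hAB'
    have hunion : (B.1 ∪ Bv.1).card ≤ h + 1 := by
      have hsub : B.1 ∪ Bv.1 ⊆ insert a B.1 := by
        intro x hx
        rcases mem_union.1 hx with hx | hx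
        · exact mem_insert_of_mem hx
        · rcases mem_insert.1 hx with hx | hx
          · exact hx ▸ mem_insert_self a B.1
          · exact mem_insert_of_mem (mem_of_mem_erase hx)
      calc (B.1 ∪ Bv.1).card ≤ (insert a B.1).card := card_le_card hsub
        _ ≤ B.1.card + 1 := card_insert_le _ _
        _ = h + 1 := by rw [B.2]
    have hcompl : h ≤ ((B.1 ∪ Bv.1)ᶜ).card := by
      rw [card_compl, Fintype.card_fin]
      omega
    obtain ⟨C, hCsub, hCcard⟩ := Finset.exists_subset_card_eq hcompl
    set Cv : KV m h := ⟨C, hCcard⟩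
    have hCd : ∀ x ∈ C, x ∉ B.1 ∪ Bv.1 := fun x hx => mem_compl.1 (hCsub hx)
    have hadj1 : (kneserGraph m h).Adj Bv Cv := by
      rw [kneser_adj hh]
      exact disjoint_left.2 fun x hx hxC =>
        hCd x hxC (mem_union_right _ hx)
    have hadj2 : (kneserGraph m h).Adj Cv B := by
      rw [kneser_adj hh]
      exact disjoint_left.2 fun x hx hxB => hCd x hx (mem_union_left _ hxB)
    exact Relation.ReflTransGen.tail (Relation.ReflTransGen.tail step1 hadj1) hadj2

end KN


namespace KN
open Finset

open KC

variable {m h : ℕ}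

lemma kneser_degree (hh : 1 ≤ h) (hm : 2 * h + 1 ≤ m) (A : KV m h) :
    (KC.nbhd (kneserGraph m h) {A}).card = (m - h).choose h := by
  classical
  have hset : KC.nbhd (kneserGraph m h) {A}
      = Finset.univ.filter (fun B : KV m h => (kneserGraph m h).Adj A B) := by
    ext B
    simp only [KC.mem_nbhd, Finset.mem_filter, Finset.mem_univ, true_and,
      Finset.mem_singleton]
    constructor
    · rintro ⟨hB, u, hu, hadj⟩
      exact hu ▸ hadj
    · intro hadj
      exact ⟨fun hBA => hadj.ne' hBA, A, rfl, hadj⟩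
  have hcard : (Finset.univ.filter (fun B : KV m h => (kneserGraph m h).Adj A B)).card
      = ((A.1ᶜ).powersetCard h).card := by
    apply Finset.card_bij (fun B _ => B.1)
    · intro B hB
      rw [Finset.mem_powersetCard]
      have hadj := (Finset.mem_filter.1 hB).2
      rw [kneser_adj hh] at hadj
      refine ⟨fun x hx => Finset.mem_compl.2 fun hxA => ?_, B.2⟩
      exact Finset.disjoint_left.1 hadj hxA hx
    · intro a _ b _ hab
      exact Subtype.ext hab
    · intro t ht
      rw [Finset.mem_powersetCard] at ht
      refine ⟨⟨t, ht.2⟩, Finset.mem_filter.2 ⟨Finset.mem_univ _, ?_⟩, rfl⟩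
      rw [kneser_adj hh]
      exact Finset.disjoint_left.2 fun x hxA hxt => Finset.mem_compl.1 (ht.1 hxt) hxA
  rw [hset, hcard, Finset.card_powersetCard, Finset.card_compl, Fintype.card_fin, A.2]

end KN

namespace KC
open Finset

lemma induce_reachable_iff {V : Type} [Fintype V] [DecidableEq V] (G : SimpleGraph V)
    (s : Finset V) (a b : V) (ha : a ∉ s) (hb : b ∉ s) :
    (G.induce {v : V | v ∉ s}).Reachable
        ⟨a, (show a ∈ {v : V | v ∉ s} from ha)⟩ ⟨b, (show b ∈ {v : V | v ∉ s} from hb)⟩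
      ↔ RO G s a b := by
  rw [SimpleGraph.reachable_iff_reflTransGen]
  constructor
  · intro hr
    exact Relation.ReflTransGen.lift (fun x : {v : V | v ∉ s} => (x : V))
      (fun x y hxy => ⟨hxy, x.2, y.2⟩) _ _ hr
  · intro hr
    have key : ∀ c, RO G s a c → ∀ (hc : c ∉ s),
        Relation.ReflTransGen (G.induce {v : V | v ∉ s}).Adj
          ⟨a, (show a ∈ {v : V | v ∉ s} from ha)⟩
          ⟨c, (show c ∈ {v : V | v ∉ s} from hc)⟩ := by
      intro c hro
      induction hro with
      | refl => intro hc; exact Relation.ReflTransGen.refl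
      | tail hprev step ih =>
        intro hc
        exact Relation.ReflTransGen.tail (ih step.2.1) (by exact step.1)
    exact key b hr hb

end KC

/-- The vertex connectivity of `G`: the minimum number of vertices whose deletion
disconnects `G` or reduces it to a single vertex. -/
noncomputable def vertexConnectivity {V : Type} [Fintype V] (G : SimpleGraph V) : ℕ :=
  sInf {k | ∃ s : Finset V, s.card = k ∧
    ((∃ a b : {v : V | v ∉ s}, ¬ (G.induce {v : V | v ∉ s}).Reachable a b) ∨
      Nat.card {v : V | v ∉ s} = 1)}

theorem kneser_connectivity (m h : ℕ) (hm : 2 * h + 1 ≤ m) (hh : 1 ≤ h) :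
    vertexConnectivity (kneserGraph m h) = (m - h).choose h := by
  classical
  have hhm : h + 1 ≤ m - h := by omega
  set V := {s : Finset (Fin m) // s.card = h}
  set G := kneserGraph m h with hG
  set d := (m - h).choose h with hd
  have hreg : ∀ v : V, (KC.nbhd G {v}).card = d := fun v => KN.kneser_degree hh hm v
  have hconn := KN.kneser_conn (m := m) (h := h) hh hm
  have hcardV : Fintype.card V = m.choose h := by
    rw [Fintype.card_finset_len, Fintype.card_fin]
  have hdlt : d + 1 ≤ m.choose h := by
    obtain ⟨p, rfl⟩ : ∃ p, h = p + 1 := ⟨h - 1, by omega⟩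
    have h1 := Nat.choose_succ_succ (m - (p + 1)) p
    simp only [Nat.succ_eq_add_one] at h1
    have h2 : 1 ≤ (m - (p + 1)).choose p :=
      Nat.choose_pos (by omega)
    have h3 : (m - (p + 1) + 1).choose (p + 1) ≤ m.choose (p + 1) :=
      Nat.choose_le_choose (p + 1) (by omega)
    omega
  -- the candidate separating set: the neighborhood of a vertex
  obtain ⟨A0s, -, hA0c⟩ := Finset.exists_subset_card_eq
    (show h ≤ (Finset.univ : Finset (Fin m)).card by
      rw [Finset.card_univ, Fintype.card_fin]; omega)
  set A0 : V := ⟨A0s, hA0c⟩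
  set t : Finset V := KC.nbhd G {A0} with ht
  have hA0t : A0 ∉ t := KC.not_mem_nbhd_of_mem (Finset.mem_singleton_self _)
  have hmem : d ∈ {k | ∃ s : Finset V, s.card = k ∧
      ((∃ a b : {v : V | v ∉ s}, ¬ (G.induce {v : V | v ∉ s}).Reachable a b) ∨
        Nat.card {v : V | v ∉ s} = 1)} := by
    refine ⟨t, hreg A0, ?_⟩
    by_cases hex : ∃ b : V, b ∉ t ∧ b ≠ A0
    · left
      obtain ⟨b, hbt, hbA⟩ := hex
      refine ⟨⟨A0, (show A0 ∈ {v : V | v ∉ t} from hA0t)⟩,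
        ⟨b, (show b ∈ {v : V | v ∉ t} from hbt)⟩, ?_⟩
      rw [KC.induce_reachable_iff G t A0 b hA0t hbt]
      intro hro
      rcases Relation.ReflTransGen.cases_head hro with heq | ⟨c, hstep, -⟩
      · exact hbA heq.symm
      · refine hstep.2.2 (KC.mem_nbhd.2 ⟨?_, A0, Finset.mem_singleton_self _, hstep.1⟩)
        rw [Finset.mem_singleton]
        exact hstep.1.ne'
    · right
      push_neg at hex
      have hseteq : {v : V | v ∉ t} = {A0} := by
        ext v
        simp only [Set.mem_setOf_eq, Set.mem_singleton_iff]
        exact ⟨fun hv => hex v hv, fun hv => hv ▸ hA0t⟩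
      rw [hseteq, Nat.card_coe_set_eq, Set.ncard_singleton]
  have hlb : ∀ k ∈ {k | ∃ s : Finset V, s.card = k ∧
      ((∃ a b : {v : V | v ∉ s}, ¬ (G.induce {v : V | v ∉ s}).Reachable a b) ∨
        Nat.card {v : V | v ∉ s} = 1)}, d ≤ k := by
    rintro k ⟨s, hsc, hcase | hcase⟩
    · obtain ⟨a, b, hnr⟩ := hcase
      have hsep : KC.Sep G s := by
        refine ⟨a.1, b.1, a.2, b.2, fun hro => hnr ?_⟩
        have := (KC.induce_reachable_iff G s a.1 b.1 a.2 b.2).2 hro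
        convert this using 2
      exact hsc ▸ KC.watkins d hreg hconn (fun u v u' v' h1 h2 =>
        KN.kneser_edge_trans hh u v u' v' h1 h2) hsep
    · have h1 : Nat.card {v : V | v ∉ s} = Fintype.card V - s.card := by
        have : {v : V | v ∉ s} = ↑(sᶜ) := by
          ext v
          simp [Finset.mem_compl]
        rw [this, Nat.card_coe_set_eq, Set.ncard_coe_finset, Finset.card_compl]
      have h2 : s.card ≤ Fintype.card V := by
        rw [← Finset.card_univ]
        exact Finset.card_le_univ s
      rw [h1] at hcase
      omega
  exact le_antisymm (Nat.sInf_le hmem) (le_csInf ⟨d, hmem⟩ hlb)
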